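/- The set B = {x_l^{Γ,-}, h_k^Γ, x_j^{Γ,+} : k ∈ ℤ≥0, j,l ∈ ℕ+} is a ℂ-basis of the Onsager algebra realized as the fixed-point subalgebra of sl₂ ⊗ ℂ[t,t^{-1}] under the diagonal ℤ/2 action with σ·x^± = -x^∓, σ·h = -h, σ·t = t^{-1}. -/

import Mathlib

open LaurentPolynomial

noncomputable section

/-- The (enlarged) loop algebra: `2×2` matrices over `ℂ[t,t⁻¹]`, with the commutator
Lie bracket.  `sl₂ ⊗ ℂ[t,t⁻¹]` is its trace-zero part. -/
abbrev LoopM : Type := Matrix (Fin 2) (Fin 2) (LaurentPolynomial ℂ)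

def xP : LoopM := !![0, 1; 0, 0]
def xM : LoopM := !![0, 0; 1, 0]
def hS : LoopM := !![1, 0; 0, -1]

/-- `h^Γ = -i(x⁺ - x⁻)`. -/
def hGam : LoopM := (-(C Complex.I) : LaurentPolynomial ℂ) • (xP - xM)

/-- `x₊^Γ = (1/2)(x⁺ + x⁻ - ih)`. -/
def xGamP : LoopM :=
  (C ((1 : ℂ) / 2) : LaurentPolynomial ℂ) • (xP + xM - (C Complex.I : LaurentPolynomial ℂ) • hS)

/-- `x₋^Γ = (1/2)(x⁺ + x⁻ + ih)`. -/
def xGamM : LoopM :=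
  (C ((1 : ℂ) / 2) : LaurentPolynomial ℂ) • (xP + xM + (C Complex.I : LaurentPolynomial ℂ) • hS)

/-- `h_k^Γ = h^Γ ⊗ (t^k + t^{-k})` (for all `k ∈ ℤ`; the convention `h^Γ_{-k} = h^Γ_k`
holds automatically). -/
def hGamF (k : ℤ) : LoopM := (T k + T (-k) : LaurentPolynomial ℂ) • hGam

/-- `x_j^{Γ,+} = x₊^Γ ⊗ (t^j - t^{-j})` (for all `j ∈ ℤ`; the conventions
`x^{Γ,+}_{-j} = -x^{Γ,+}_j`, `x^{Γ,+}_0 = 0` hold automatically). -/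
def xGamPF (j : ℤ) : LoopM := (T j - T (-j) : LaurentPolynomial ℂ) • xGamP

/-- `x_l^{Γ,-} = x₋^Γ ⊗ (t^l - t^{-l})`. -/
def xGamMF (l : ℤ) : LoopM := (T l - T (-l) : LaurentPolynomial ℂ) • xGamM

/-- The diagonal `ℤ/2`-action: `σ·x^± = -x^∓`, `σ·h = -h` (i.e. `M ↦ -Mᵀ` on `sl₂`)
together with `t ↦ t⁻¹`. -/
def sigmaMap (M : LoopM) : LoopM := -(Matrix.transpose (M.map (invert (R := ℂ))))

/-- The family `B = {x_l^{Γ,-}, h_k^Γ, x_j^{Γ,+} : k ∈ ℤ≥0, j,l ∈ ℕ+}`. -/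
def gammaFam : ℕ+ ⊕ ℕ ⊕ ℕ+ → LoopM :=
  Sum.elim (fun l => xGamMF ((l : ℕ) : ℤ))
    (Sum.elim (fun k => hGamF (k : ℤ)) (fun j => xGamPF ((j : ℕ) : ℤ)))

/- constants matrices -/
def cH : Matrix (Fin 2) (Fin 2) ℂ := !![0, -Complex.I; Complex.I, 0]
def cP : Matrix (Fin 2) (Fin 2) ℂ := !![-(Complex.I/2), 1/2; 1/2, Complex.I/2]
def cM : Matrix (Fin 2) (Fin 2) ℂ := !![Complex.I/2, 1/2; 1/2, -(Complex.I/2)]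

lemma hGamF_entry (k : ℤ) (i j : Fin 2) :
    hGamF k i j = C (cH i j) * (T k + T (-k)) := by
  fin_cases i <;> fin_cases j <;>
    simp [hGamF, hGam, xP, xM, hS, cH, Matrix.smul_apply, div_eq_mul_inv, one_div,
      map_mul, map_neg] <;> ring

lemma xGamPF_entry (m : ℤ) (i j : Fin 2) :
    xGamPF m i j = C (cP i j) * (T m - T (-m)) := by
  fin_cases i <;> fin_cases j <;>
    simp [xGamPF, xGamP, xP, xM, hS, cP, Matrix.smul_apply, div_eq_mul_inv, one_div,
      map_mul, map_neg] <;> ring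

lemma xGamMF_entry (m : ℤ) (i j : Fin 2) :
    xGamMF m i j = C (cM i j) * (T m - T (-m)) := by
  fin_cases i <;> fin_cases j <;>
    simp [xGamMF, xGamM, xP, xM, hS, cM, Matrix.smul_apply, div_eq_mul_inv, one_div,
      map_mul, map_neg] <;> ring

/- coefficient functionals -/
def coeffL (i j : Fin 2) (n : ℤ) : LoopM →ₗ[ℂ] ℂ where
  toFun M := (M i j).coeff n
  map_add' _ _ := rfl
  map_smul' _ _ := rfl

@[simp] lemma coeffL_apply (i j : Fin 2) (n : ℤ) (M : LoopM) : coeffL i j n M = (M i j).coeff n := rfl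

lemma coeff_CT (a : ℂ) (m n : ℤ) : (C a * T m : LaurentPolynomial ℂ).coeff n = if m = n then a else 0 := by
  rw [← single_eq_C_mul_T]; exact Finsupp.single_apply

lemma coeff_anti (a : ℂ) (m n : ℤ) :
    (C a * (T m - T (-m)) : LaurentPolynomial ℂ).coeff n
      = a * ((if m = n then (1:ℂ) else 0) - if -m = n then 1 else 0) := by
  have : (C a * (T m - T (-m)) : LaurentPolynomial ℂ).coeff n
      = (C a * T m : LaurentPolynomial ℂ).coeff n - (C a * T (-m) : LaurentPolynomial ℂ).coeff n := by
    rw [mul_sub]; rfl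
  rw [this, coeff_CT, coeff_CT]; split_ifs <;> ring

lemma coeff_sym (a : ℂ) (m n : ℤ) :
    (C a * (T m + T (-m)) : LaurentPolynomial ℂ).coeff n
      = a * ((if m = n then (1:ℂ) else 0) + if -m = n then 1 else 0) := by
  have : (C a * (T m + T (-m)) : LaurentPolynomial ℂ).coeff n
      = (C a * T m : LaurentPolynomial ℂ).coeff n + (C a * T (-m) : LaurentPolynomial ℂ).coeff n := by
    rw [mul_add]; rfl
  rw [this, coeff_CT, coeff_CT]; split_ifs <;> ring

/- the three picking functionals -/
def phiM (m : ℕ+) : LoopM →ₗ[ℂ] ℂ :=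
  ((1:ℂ)/2) • (coeffL 0 1 (m : ℕ) + coeffL 1 0 (m : ℕ)) - Complex.I • coeffL 0 0 (m : ℕ)
def phiP (m : ℕ+) : LoopM →ₗ[ℂ] ℂ :=
  ((1:ℂ)/2) • (coeffL 0 1 (m : ℕ) + coeffL 1 0 (m : ℕ)) + Complex.I • coeffL 0 0 (m : ℕ)
def phiH (k : ℕ) : LoopM →ₗ[ℂ] ℂ :=
  (-(Complex.I/2)) • (coeffL 1 0 (k : ℕ) - coeffL 0 1 (k : ℕ))

lemma pnat_neg_ne (m' m : ℕ+) : -((m' : ℕ) : ℤ) ≠ ((m : ℕ) : ℤ) := by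
  have h1 : (1:ℕ) ≤ (m' : ℕ) := m'.one_le
  have h2 : (1:ℕ) ≤ (m : ℕ) := m.one_le
  omega

lemma pnat_cast_eq (m' m : ℕ+) : (((m' : ℕ) : ℤ) = ((m : ℕ) : ℤ)) ↔ m' = m := by
  rw [Int.ofNat_inj]; exact PNat.coe_inj

/- values of phiM -/
lemma phiM_inl (m m' : ℕ+) :
    phiM m (gammaFam (Sum.inl m')) = if m' = m then 1 else 0 := by
  simp only [gammaFam, Sum.elim_inl, phiM, LinearMap.sub_apply, LinearMap.add_apply,
    LinearMap.smul_apply, coeffL_apply, smul_eq_mul,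
    xGamMF_entry, coeff_anti, cM]
  rw [if_neg (pnat_neg_ne m' m)]
  by_cases h : m' = m
  · rw [if_pos ((pnat_cast_eq m' m).mpr h), if_pos h]
    simp; ring_nf; simp [Complex.I_sq]; ring
  · rw [if_neg (fun hc => h ((pnat_cast_eq m' m).mp hc)), if_neg h]; simp

lemma phiM_inrl (m : ℕ+) (k : ℕ) :
    phiM m (gammaFam (Sum.inr (Sum.inl k))) = 0 := by
  simp only [gammaFam, Sum.elim_inr, Sum.elim_inl, phiM, LinearMap.sub_apply,
    LinearMap.add_apply, LinearMap.smul_apply, coeffL_apply, smul_eq_mul,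
    hGamF_entry, coeff_sym, cH]
  simp
  split_ifs <;> ring

lemma phiM_inrr (m m' : ℕ+) :
    phiM m (gammaFam (Sum.inr (Sum.inr m'))) = 0 := by
  simp only [gammaFam, Sum.elim_inr, phiM, LinearMap.sub_apply, LinearMap.add_apply,
    LinearMap.smul_apply, coeffL_apply, smul_eq_mul,
    xGamPF_entry, coeff_anti, cP]
  rw [if_neg (pnat_neg_ne m' m)]
  by_cases h : (((m' : ℕ) : ℤ) = ((m : ℕ) : ℤ))
  · rw [if_pos h]; simp; ring_nf; simp [Complex.I_sq]; try norm_num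
  · rw [if_neg h]; simp

/- values of phiP -/
lemma phiP_inl (m m' : ℕ+) :
    phiP m (gammaFam (Sum.inl m')) = 0 := by
  simp only [gammaFam, Sum.elim_inl, phiP, LinearMap.add_apply,
    LinearMap.smul_apply, coeffL_apply, smul_eq_mul,
    xGamMF_entry, coeff_anti, cM]
  rw [if_neg (pnat_neg_ne m' m)]
  by_cases h : (((m' : ℕ) : ℤ) = ((m : ℕ) : ℤ))
  · rw [if_pos h]; simp; ring_nf; simp [Complex.I_sq]; try norm_num
  · rw [if_neg h]; simp

lemma phiP_inrl (m : ℕ+) (k : ℕ) :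
    phiP m (gammaFam (Sum.inr (Sum.inl k))) = 0 := by
  simp only [gammaFam, Sum.elim_inr, Sum.elim_inl, phiP, LinearMap.add_apply,
    LinearMap.smul_apply, coeffL_apply, smul_eq_mul,
    hGamF_entry, coeff_sym, cH]
  simp
  split_ifs <;> ring

lemma phiP_inrr (m m' : ℕ+) :
    phiP m (gammaFam (Sum.inr (Sum.inr m'))) = if m' = m then 1 else 0 := by
  simp only [gammaFam, Sum.elim_inr, phiP, LinearMap.add_apply,
    LinearMap.smul_apply, coeffL_apply, smul_eq_mul,
    xGamPF_entry, coeff_anti, cP]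
  rw [if_neg (pnat_neg_ne m' m)]
  by_cases h : m' = m
  · rw [if_pos ((pnat_cast_eq m' m).mpr h), if_pos h]
    simp; ring_nf; simp [Complex.I_sq]; try ring
  · rw [if_neg (fun hc => h ((pnat_cast_eq m' m).mp hc)), if_neg h]; simp

/- values of phiH -/
lemma phiH_inl (k : ℕ) (m' : ℕ+) :
    phiH k (gammaFam (Sum.inl m')) = 0 := by
  simp only [gammaFam, Sum.elim_inl, phiH, LinearMap.sub_apply,
    LinearMap.smul_apply, coeffL_apply, smul_eq_mul,
    xGamMF_entry, coeff_anti, cM]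
  simp

lemma phiH_inrr (k : ℕ) (m' : ℕ+) :
    phiH k (gammaFam (Sum.inr (Sum.inr m'))) = 0 := by
  simp only [gammaFam, Sum.elim_inr, phiH, LinearMap.sub_apply,
    LinearMap.smul_apply, coeffL_apply, smul_eq_mul,
    xGamPF_entry, coeff_anti, cP]
  simp

lemma phiH_inrl (k k' : ℕ) :
    phiH k (gammaFam (Sum.inr (Sum.inl k')))
      = (if k' = k then 1 else 0) + (if k' = 0 ∧ k = 0 then 1 else 0) := by
  simp only [gammaFam, Sum.elim_inr, Sum.elim_inl, phiH, LinearMap.sub_apply,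
    LinearMap.smul_apply, coeffL_apply, smul_eq_mul,
    hGamF_entry, coeff_sym, cH]
  have h1 : ((k' : ℤ) = (k : ℤ)) ↔ k' = k := Int.ofNat_inj
  have h2 : (-(k' : ℤ) = (k : ℤ)) ↔ (k' = 0 ∧ k = 0) := by omega
  simp only [h1, h2]
  by_cases hA : k' = k
  · subst hA
    by_cases hk : k' = 0 <;>
      simp [hk] <;> ring_nf <;> simp [Complex.I_sq] <;> try ring
  · have hB : ¬(k' = 0 ∧ k = 0) := fun h => hA (h.1.trans h.2.symm)
    simp [hA, hB] <;> ring_nf <;> simp [Complex.I_sq] <;> try ring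

lemma sum_zero_of (φ : LoopM →ₗ[ℂ] ℂ) {l : (ℕ+ ⊕ ℕ ⊕ ℕ+) →₀ ℂ}
    (hl : Finsupp.linearCombination ℂ gammaFam l = 0) :
    (l.sum fun i c => c * φ (gammaFam i)) = 0 := by
  have h := congrArg φ hl
  rw [Finsupp.linearCombination_apply, map_finsuppSum, map_zero] at h
  simpa [map_smul, smul_eq_mul] using h

lemma extract (φ : LoopM →ₗ[ℂ] ℂ) {l : (ℕ+ ⊕ ℕ ⊕ ℕ+) →₀ ℂ}
    (hl : Finsupp.linearCombination ℂ gammaFam l = 0)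
    (i₀ : ℕ+ ⊕ ℕ ⊕ ℕ+) (κ : ℂ) (hκ : κ ≠ 0)
    (hv : ∀ i, φ (gammaFam i) = if i = i₀ then κ else 0) : l i₀ = 0 := by
  have h0 := sum_zero_of φ hl
  rw [Finsupp.sum] at h0
  rw [Finset.sum_eq_single i₀ (fun b _ hb => by rw [hv b, if_neg hb, mul_zero])
    (fun h => by rw [Finsupp.notMem_support_iff.mp h, zero_mul])] at h0
  rw [hv i₀, if_pos rfl] at h0
  exact (mul_eq_zero.mp h0).resolve_right hκ

lemma gammaFam_indep : LinearIndependent ℂ gammaFam := by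
  rw [linearIndependent_iff]
  intro l hl
  ext i
  simp only [Finsupp.coe_zero, Pi.zero_apply]
  rcases i with m | k | m
  · refine extract (phiM m) hl (Sum.inl m) 1 one_ne_zero ?_
    rintro (m' | k' | m')
    · rw [phiM_inl]; simp
    · rw [phiM_inrl]; simp
    · rw [phiM_inrr m m']; simp
  · refine extract (phiH k) hl (Sum.inr (Sum.inl k)) (1 + if k = 0 then 1 else 0) ?_ ?_
    · split_ifs <;> norm_num
    · rintro (m' | k' | m')
      · rw [phiH_inl]; simp
      · rw [phiH_inrl]
        by_cases h : k' = k
        · subst h; simp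
        · have hB : ¬(k' = 0 ∧ k = 0) := fun hc => h (hc.1.trans hc.2.symm)
          simp [h, hB]
      · rw [phiH_inrr]; simp
  · refine extract (phiP m) hl (Sum.inr (Sum.inr m)) 1 one_ne_zero ?_
    rintro (m' | k' | m')
    · rw [phiP_inl]; simp
    · rw [phiP_inrl]; simp
    · rw [phiP_inrr m m']; simp

/- ## The fixed-point submodule -/
lemma sigmaMap_apply (M : LoopM) (i j : Fin 2) : sigmaMap M i j = -(invert (M j i)) := rfl

def traceL : LoopM →ₗ[ℂ] LaurentPolynomial ℂ := Matrix.traceLinearMap (Fin 2) ℂ _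

def sigmaL : LoopM →ₗ[ℂ] LoopM where
  toFun := sigmaMap
  map_add' M N := by ext i j; simp [sigmaMap_apply, Matrix.add_apply, map_add]; ring
  map_smul' z M := by ext i j; simp [sigmaMap_apply, Matrix.smul_apply, map_smul]

def W : Submodule ℂ LoopM := LinearMap.ker traceL ⊓ LinearMap.ker (sigmaL - LinearMap.id)

lemma mem_W_iff (M : LoopM) : M ∈ W ↔ Matrix.trace M = 0 ∧ sigmaMap M = M := by
  simp only [W, Submodule.mem_inf, LinearMap.mem_ker, LinearMap.sub_apply, LinearMap.id_apply,
    sub_eq_zero]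
  rfl

lemma trace_hGamF (k : ℤ) : Matrix.trace (hGamF k) = 0 := by
  rw [Matrix.trace_fin_two, hGamF_entry, hGamF_entry]
  simp [cH]

lemma trace_xGamPF (m : ℤ) : Matrix.trace (xGamPF m) = 0 := by
  rw [Matrix.trace_fin_two, xGamPF_entry, xGamPF_entry]
  simp [cP, map_neg]

lemma trace_xGamMF (m : ℤ) : Matrix.trace (xGamMF m) = 0 := by
  rw [Matrix.trace_fin_two, xGamMF_entry, xGamMF_entry]
  simp [cM, map_neg]

lemma sigma_hGamF (k : ℤ) : sigmaMap (hGamF k) = hGamF k := by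
  ext i j
  rw [sigmaMap_apply, hGamF_entry, hGamF_entry]
  fin_cases i <;> fin_cases j <;>
    simp [cH, map_mul, map_add, map_neg] <;> try ring

lemma sigma_xGamPF (m : ℤ) : sigmaMap (xGamPF m) = xGamPF m := by
  ext i j : 1
  rw [sigmaMap_apply, xGamPF_entry, xGamPF_entry]
  fin_cases i <;> fin_cases j <;>
    simp [cP, map_mul, map_sub, map_neg] <;> try ring

lemma sigma_xGamMF (m : ℤ) : sigmaMap (xGamMF m) = xGamMF m := by
  ext i j : 1
  rw [sigmaMap_apply, xGamMF_entry, xGamMF_entry]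
  fin_cases i <;> fin_cases j <;>
    simp [cM, map_mul, map_sub, map_neg] <;> try ring

lemma span_le_W : Submodule.span ℂ (Set.range gammaFam) ≤ W := by
  rw [Submodule.span_le]
  rintro _ ⟨i, rfl⟩
  rcases i with m | k | m <;> rw [SetLike.mem_coe, mem_W_iff]
  · exact ⟨trace_xGamMF _, sigma_xGamMF _⟩
  · exact ⟨trace_hGamF _, sigma_hGamF _⟩
  · exact ⟨trace_xGamPF _, sigma_xGamPF _⟩

/- ## Decomposition: fixed points lie in the span -/
lemma C_mul_eq_smul (z : ℂ) (f : LaurentPolynomial ℂ) : (C z : LaurentPolynomial ℂ) * f = z • f := by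
  rw [C_eq_algebraMap, ← Algebra.smul_def]

lemma Csmul_mat (z : ℂ) (M : LoopM) : (C z : LaurentPolynomial ℂ) • M = z • M := by
  rw [C_eq_algebraMap, algebraMap_smul]

def antiGen : Set (LaurentPolynomial ℂ) := Set.range fun m : ℕ+ => (T ((m:ℕ):ℤ) - T (-((m:ℕ):ℤ)))
def symGen : Set (LaurentPolynomial ℂ) := Set.range fun k : ℕ => (T ((k:ℕ):ℤ) + T (-((k:ℕ):ℤ)))

lemma T_sub_mem (n : ℤ) : (T n - T (-n) : LaurentPolynomial ℂ) ∈ Submodule.span ℂ antiGen := by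
  rcases Int.eq_nat_or_neg n with ⟨m, rfl | rfl⟩
  · rcases Nat.eq_zero_or_pos m with h0 | hpos
    · subst h0; simp
    · exact Submodule.subset_span ⟨⟨m, hpos⟩, rfl⟩
  · rcases Nat.eq_zero_or_pos m with h0 | hpos
    · subst h0; simp
    · have : (T (-(m:ℤ)) - T (-(-(m:ℤ))) : LaurentPolynomial ℂ)
          = -(T ((m:ℕ):ℤ) - T (-((m:ℕ):ℤ))) := by rw [neg_neg]; ring
      rw [this]
      exact neg_mem (Submodule.subset_span ⟨⟨m, hpos⟩, rfl⟩)

lemma T_add_mem (n : ℤ) : (T n + T (-n) : LaurentPolynomial ℂ) ∈ Submodule.span ℂ symGen := by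
  rcases Int.eq_nat_or_neg n with ⟨m, rfl | rfl⟩
  · exact Submodule.subset_span ⟨m, rfl⟩
  · have : (T (-(m:ℤ)) + T (-(-(m:ℤ))) : LaurentPolynomial ℂ)
        = T ((m:ℕ):ℤ) + T (-((m:ℕ):ℤ)) := by rw [neg_neg]; ring
    rw [this]
    exact Submodule.subset_span ⟨m, rfl⟩

lemma sub_invert_mem (f : LaurentPolynomial ℂ) :
    f - invert f ∈ Submodule.span ℂ antiGen := by
  induction f using LaurentPolynomial.induction_on' with
  | add f g hf hg =>
    have : f + g - invert (f + g) = (f - invert f) + (g - invert g) := by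
      rw [map_add]; ring
    rw [this]; exact add_mem hf hg
  | C_mul_T n a =>
    have : (C a * T n : LaurentPolynomial ℂ) - invert (C a * T n)
        = a • (T n - T (-n)) := by
      rw [map_mul, invert_C, invert_T, ← C_mul_eq_smul, mul_sub]
    rw [this]
    exact Submodule.smul_mem _ _ (T_sub_mem n)

lemma add_invert_mem (f : LaurentPolynomial ℂ) :
    f + invert f ∈ Submodule.span ℂ symGen := by
  induction f using LaurentPolynomial.induction_on' with
  | add f g hf hg =>
    have : f + g + invert (f + g) = (f + invert f) + (g + invert g) := by
      rw [map_add]; ring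
    rw [this]; exact add_mem hf hg
  | C_mul_T n a =>
    have : (C a * T n : LaurentPolynomial ℂ) + invert (C a * T n)
        = a • (T n + T (-n)) := by
      rw [map_mul, invert_C, invert_T, ← C_mul_eq_smul, mul_add]
    rw [this]
    exact Submodule.smul_mem _ _ (T_add_mem n)

def V : Submodule ℂ LoopM := Submodule.span ℂ (Set.range gammaFam)

lemma smul_mem_V {S : Set (LaurentPolynomial ℂ)} {f : LaurentPolynomial ℂ} {X : LoopM}
    (hf : f ∈ Submodule.span ℂ S) (hX : ∀ s ∈ S, s • X ∈ V) : f • X ∈ V := by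
  induction hf using Submodule.span_induction with
  | mem s hs => exact hX s hs
  | zero => rw [zero_smul]; exact zero_mem _
  | add f g _ _ hf hg => rw [add_smul]; exact add_mem hf hg
  | smul z f _ hf => rw [smul_assoc]; exact Submodule.smul_mem _ _ hf

/- structural identities -/
lemma xGamM_sub_xGamP : xGamM - xGamP = Complex.I • hS := by
  simp only [xGamM, xGamP, Csmul_mat]
  module

lemma xGamM_add_xGamP : xGamM + xGamP = xP + xM := by
  simp only [xGamM, xGamP, Csmul_mat]
  module

lemma hS_eq : hS = (-Complex.I) • xGamM + Complex.I • xGamP := by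
  have h2 : (-Complex.I) • (xGamM - xGamP) = hS := by
    rw [xGamM_sub_xGamP, smul_smul, neg_mul, Complex.I_mul_I, neg_neg, one_smul]
  rw [← h2, smul_sub]; module

lemma xP_sub_xM : xP - xM = Complex.I • hGam := by
  have : Complex.I • hGam = xP - xM := by
    rw [hGam, neg_smul, Csmul_mat, smul_neg, smul_smul, Complex.I_mul_I, neg_smul, one_smul,
      neg_neg]
  exact this.symm

/- generator memberships -/
lemma anti_smul_hS_mem (m : ℕ+) :
    ((T ((m:ℕ):ℤ) - T (-((m:ℕ):ℤ)) : LaurentPolynomial ℂ)) • hS ∈ V := by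
  rw [hS_eq, smul_add, smul_comm _ (-Complex.I), smul_comm _ Complex.I]
  have h1 : (T ((m:ℕ):ℤ) - T (-((m:ℕ):ℤ)) : LaurentPolynomial ℂ) • xGamM
      = gammaFam (Sum.inl m) := rfl
  have h2 : (T ((m:ℕ):ℤ) - T (-((m:ℕ):ℤ)) : LaurentPolynomial ℂ) • xGamP
      = gammaFam (Sum.inr (Sum.inr m)) := rfl
  rw [h1, h2]
  exact add_mem (Submodule.smul_mem _ _ (Submodule.subset_span ⟨_, rfl⟩))
    (Submodule.smul_mem _ _ (Submodule.subset_span ⟨_, rfl⟩))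

lemma anti_smul_xPxM_mem (m : ℕ+) :
    ((T ((m:ℕ):ℤ) - T (-((m:ℕ):ℤ)) : LaurentPolynomial ℂ)) • (xP + xM) ∈ V := by
  rw [← xGamM_add_xGamP, smul_add]
  have h1 : (T ((m:ℕ):ℤ) - T (-((m:ℕ):ℤ)) : LaurentPolynomial ℂ) • xGamM
      = gammaFam (Sum.inl m) := rfl
  have h2 : (T ((m:ℕ):ℤ) - T (-((m:ℕ):ℤ)) : LaurentPolynomial ℂ) • xGamP
      = gammaFam (Sum.inr (Sum.inr m)) := rfl
  rw [h1, h2]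
  exact add_mem (Submodule.subset_span ⟨_, rfl⟩) (Submodule.subset_span ⟨_, rfl⟩)

lemma sym_smul_xPmxM_mem (k : ℕ) :
    ((T ((k:ℕ):ℤ) + T (-((k:ℕ):ℤ)) : LaurentPolynomial ℂ)) • (xP - xM) ∈ V := by
  rw [xP_sub_xM, smul_comm]
  have h1 : (T ((k:ℕ):ℤ) + T (-((k:ℕ):ℤ)) : LaurentPolynomial ℂ) • hGam
      = gammaFam (Sum.inr (Sum.inl k)) := rfl
  rw [h1]
  exact Submodule.smul_mem _ _ (Submodule.subset_span ⟨_, rfl⟩)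

lemma M_decomp (M : LoopM) (h11 : M 1 1 = -(M 0 0)) :
    M = M 0 0 • hS + M 0 1 • xP + M 1 0 • xM := by
  ext i j
  fin_cases i <;> fin_cases j <;>
    simp [hS, xP, xM, Matrix.smul_apply, h11]

lemma fixed_mem_V {M : LoopM} (htr : Matrix.trace M = 0) (hσ : sigmaMap M = M) : M ∈ V := by
  have h11 : M 1 1 = -(M 0 0) := by
    rw [Matrix.trace_fin_two] at htr
    linear_combination htr
  have hfix : ∀ i j, -(invert (M j i)) = M i j := by
    intro i j
    conv_rhs => rw [← hσ]
    exact (sigmaMap_apply M i j).symm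
  have ha : invert (M 0 0) = -(M 0 0) := by
    have := hfix 0 0
    linear_combination -this
  have hbc : invert (M 0 1) = -(M 1 0) := by
    have := hfix 1 0
    linear_combination -this
  set a := M 0 0 with hadef
  set b := M 0 1 with hbdef
  set c := M 1 0 with hcdef
  set bs : LaurentPolynomial ℂ := (2⁻¹ : ℂ) • (b + invert b) with hbs
  set ba : LaurentPolynomial ℂ := (2⁻¹ : ℂ) • (b - invert b) with hba
  have hb : b = bs + ba := by rw [hbs, hba]; module
  have hc : c = ba - bs := by
    have hcb : c = -(invert b) := by linear_combination hbc
    rw [hcb, hbs, hba]; module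
  have hdec : M = a • hS + bs • (xP - xM) + ba • (xP + xM) := by
    rw [M_decomp M h11, ← hadef, ← hbdef, ← hcdef, hb, hc]
    module
  rw [hdec]
  refine add_mem (add_mem ?_ ?_) ?_
  · -- a • hS
    have haa : a = (2⁻¹ : ℂ) • (a - invert a) := by rw [ha]; module
    have hmem : a ∈ Submodule.span ℂ antiGen := by
      rw [haa]; exact Submodule.smul_mem _ _ (sub_invert_mem a)
    exact smul_mem_V hmem (by rintro s ⟨m, rfl⟩; exact anti_smul_hS_mem m)
  · -- bs • (xP - xM)
    have hmem : bs ∈ Submodule.span ℂ symGen := Submodule.smul_mem _ _ (add_invert_mem b)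
    exact smul_mem_V hmem (by rintro s ⟨k, rfl⟩; exact sym_smul_xPmxM_mem k)
  · -- ba • (xP + xM)
    have hmem : ba ∈ Submodule.span ℂ antiGen := Submodule.smul_mem _ _ (sub_invert_mem b)
    exact smul_mem_V hmem (by rintro s ⟨m, rfl⟩; exact anti_smul_xPxM_mem m)

/-- `B` is a `ℂ`-basis of the Onsager algebra realized as the fixed-point subalgebra of
`sl₂ ⊗ ℂ[t,t⁻¹]` (trace-zero matrices) under the diagonal `ℤ/2`-action `σ`: the family
is `ℂ`-linearly independent and spans exactly the `σ`-fixed trace-zero elements. -/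
theorem gammaFam_basis_of_onsager :
    LinearIndependent ℂ gammaFam ∧
      (Submodule.span ℂ (Set.range gammaFam) : Set LoopM) =
        {M : LoopM | Matrix.trace M = 0 ∧ sigmaMap M = M} := by
  refine ⟨gammaFam_indep, ?_⟩
  ext M
  simp only [SetLike.mem_coe, Set.mem_setOf_eq]
  constructor
  · intro h
    exact (mem_W_iff M).mp (span_le_W h)
  · rintro ⟨h1, h2⟩
    exact fixed_mem_V h1 h2
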